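/- In the root system D₃⁽²⁾, the subset B = {β₀, β₁, β₀+β₁, 2β₀+β₁, β₀+β₁+2β₂} of the order ideal I = {β₀, β₁, β₂, β₀+β₁, β₁+β₂, 2β₀+β₁, β₁+2β₂, 2β₀+β₁+β₂, β₀+β₁+2β₂} is biclosed in I but not separable in I. -/

import Mathlib

open Set

variable {V : Type*} [AddCommGroup V] [Module ℝ V]

/-- The set of nonnegative linear combinations of elements of `A`. -/
def posSpan (A : Set V) : Set V :=
  {v | ∃ (s : Finset V) (c : V → ℝ),
    (↑s : Set V) ⊆ A ∧ (∀ x ∈ s, 0 ≤ c x) ∧ v = ∑ x ∈ s, c x • x}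

/-- The nonnegative span of the pair `α, β`. -/
def cone2 (α β : V) : Set V := {v | ∃ a b : ℝ, 0 ≤ a ∧ 0 ≤ b ∧ v = a • α + b • β}

/-- `B` is closed in `X`. -/
def IsClosedIn (X B : Set V) : Prop :=
  B ⊆ X ∧ ∀ α ∈ B, ∀ β ∈ B, ∀ γ ∈ X, γ ∈ cone2 α β → γ ∈ B

/-- `B` is coclosed in `X`. -/
def IsCoclosedIn (X B : Set V) : Prop := B ⊆ X ∧ IsClosedIn X (X \ B)

/-- `B` is biclosed in `X`. -/
def IsBiclosedIn (X B : Set V) : Prop := IsClosedIn X B ∧ IsClosedIn X (X \ B)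

/-- `B` is convex in `X`. -/
def IsConvexIn (X B : Set V) : Prop := B ⊆ X ∧ posSpan B ∩ X = B

/-- `B` is biconvex in `X`. -/
def IsBiconvexIn (X B : Set V) : Prop := IsConvexIn X B ∧ IsConvexIn X (X \ B)

/-- `B` is weakly separable in `X`. -/
def WeaklySeparableIn (X B : Set V) : Prop :=
  B ⊆ X ∧ posSpan B ∩ posSpan (X \ B) = {0}

/-- `B` is separable in `X`. -/
def SeparableIn (X B : Set V) : Prop :=
  B ⊆ X ∧ ∃ θ : Module.Dual ℝ V, (∀ α ∈ B, θ α < 0) ∧ (∀ α ∈ X \ B, 0 < θ α)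

/-- `X` is clean: every biclosed subset is weakly separable. -/
def IsCleanIn (X : Set V) : Prop := ∀ B : Set V, IsBiclosedIn X B → WeaklySeparableIn X B

/-- The closure of `U` in `X`: the smallest closed subset of `X` containing `U`. -/
def closureIn (X U : Set V) : Set V := ⋂₀ {C | U ⊆ C ∧ IsClosedIn X C}

/-- The interior of `K` in `X`. -/
def interiorIn (X K : Set V) : Set V := X \ closureIn X (X \ K)

/-- `F` is a full subset of `X`. -/
def IsFullIn (X F : Set V) : Prop :=
  F ⊆ X ∧ ∀ α ∈ F, ∀ β ∈ F, X ∩ (Submodule.span ℝ {α, β} : Set V) ⊆ F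

/-- The simple roots `β₀, β₁, β₂` of `D₃⁽²⁾`, modeled as linearly independent vectors
(the standard basis of `ℝ³`; biclosedness and separability only depend on the linear
structure). -/
noncomputable def bD (i : Fin 3) : Fin 3 → ℝ := Pi.single i 1

/-- The order ideal `I` of nine roots in `D₃⁽²⁾`. -/
noncomputable def ID3 : Set (Fin 3 → ℝ) :=
  {bD 0, bD 1, bD 2, bD 0 + bD 1, bD 1 + bD 2, (2 : ℝ) • bD 0 + bD 1,
    bD 1 + (2 : ℝ) • bD 2, (2 : ℝ) • bD 0 + bD 1 + bD 2, bD 0 + bD 1 + (2 : ℝ) • bD 2}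

/-- The subset `B` of `I`. -/
noncomputable def BD3 : Set (Fin 3 → ℝ) :=
  {bD 0, bD 1, bD 0 + bD 1, (2 : ℝ) • bD 0 + bD 1, bD 0 + bD 1 + (2 : ℝ) • bD 2}

/-- The complement `I \ B`, explicitly. -/
noncomputable def DD3' : Set (Fin 3 → ℝ) :=
  {bD 2, bD 1 + bD 2, bD 1 + (2 : ℝ) • bD 2, (2 : ℝ) • bD 0 + bD 1 + bD 2}

private lemma diffBD3 : ID3 \ BD3 = DD3' := by
  ext x
  constructor
  · rintro ⟨hI, hB⟩
    simp only [ID3, Set.mem_insert_iff, Set.mem_singleton_iff] at hI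
    simp only [BD3, Set.mem_insert_iff, Set.mem_singleton_iff, not_or] at hB
    simp only [DD3', Set.mem_insert_iff, Set.mem_singleton_iff]
    tauto
  · intro h
    simp only [DD3', Set.mem_insert_iff, Set.mem_singleton_iff] at h
    constructor
    · simp only [ID3, Set.mem_insert_iff, Set.mem_singleton_iff]; tauto
    · intro hB
      simp only [BD3, Set.mem_insert_iff, Set.mem_singleton_iff] at hB
      rcases h with rfl | rfl | rfl | rfl <;> rcases hB with h | h | h | h | h <;>
        · have h0 := congrFun h 0
          have h1 := congrFun h 1
          have h2 := congrFun h 2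
          all_goals norm_num [bD, Pi.single_apply, Fin.ext_iff] at h0
          all_goals norm_num [bD, Pi.single_apply, Fin.ext_iff] at h1
          all_goals norm_num [bD, Pi.single_apply, Fin.ext_iff] at h2

private lemma B_subset : BD3 ⊆ ID3 := by
  intro x hx
  simp only [BD3, Set.mem_insert_iff, Set.mem_singleton_iff] at hx
  simp only [ID3, Set.mem_insert_iff, Set.mem_singleton_iff]
  tauto

set_option maxHeartbeats 4000000 in
private lemma B_closed : IsClosedIn ID3 BD3 := by
  refine ⟨B_subset, ?_⟩
  intro α hα β hβ γ hγ hc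
  obtain ⟨a, b, ha, hb, hab⟩ := hc
  simp only [BD3, Set.mem_insert_iff, Set.mem_singleton_iff] at hα hβ
  simp only [ID3, Set.mem_insert_iff, Set.mem_singleton_iff] at hγ
  rcases hα with rfl | rfl | rfl | rfl | rfl <;>
    rcases hβ with rfl | rfl | rfl | rfl | rfl <;>
    rcases hγ with rfl | rfl | rfl | rfl | rfl | rfl | rfl | rfl | rfl <;>
    first
    | (simp only [BD3, Set.mem_insert_iff, Set.mem_singleton_iff]; tauto)
    | (exfalso
       have h0 := congrFun hab 0
       have h1 := congrFun hab 1
       have h2 := congrFun hab 2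
       all_goals norm_num [bD, Pi.single_apply, Fin.ext_iff] at h0
       all_goals norm_num [bD, Pi.single_apply, Fin.ext_iff] at h1
       all_goals norm_num [bD, Pi.single_apply, Fin.ext_iff] at h2
       all_goals linarith)

set_option maxHeartbeats 4000000 in
private lemma C_closed : IsClosedIn ID3 (ID3 \ BD3) := by
  refine ⟨Set.diff_subset, ?_⟩
  rw [diffBD3]
  intro α hα β hβ γ hγ hc
  obtain ⟨a, b, ha, hb, hab⟩ := hc
  simp only [DD3', Set.mem_insert_iff, Set.mem_singleton_iff] at hα hβ
  simp only [ID3, Set.mem_insert_iff, Set.mem_singleton_iff] at hγ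
  rcases hα with rfl | rfl | rfl | rfl <;>
    rcases hβ with rfl | rfl | rfl | rfl <;>
    rcases hγ with rfl | rfl | rfl | rfl | rfl | rfl | rfl | rfl | rfl <;>
    first
    | (simp only [DD3', Set.mem_insert_iff, Set.mem_singleton_iff]; tauto)
    | (exfalso
       have h0 := congrFun hab 0
       have h1 := congrFun hab 1
       have h2 := congrFun hab 2
       all_goals norm_num [bD, Pi.single_apply, Fin.ext_iff] at h0
       all_goals norm_num [bD, Pi.single_apply, Fin.ext_iff] at h1
       all_goals norm_num [bD, Pi.single_apply, Fin.ext_iff] at h2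
       all_goals linarith)

/-- In `D₃⁽²⁾`, the set `B` is biclosed in the order ideal `I` but not
separable in `I`. -/
theorem D3_twisted_biclosed_not_separable :
    IsBiclosedIn ID3 BD3 ∧ ¬ SeparableIn ID3 BD3 := by
  refine ⟨⟨B_closed, C_closed⟩, ?_⟩
  rintro ⟨-, θ, hB, hC⟩
  rw [diffBD3] at hC
  have h1 : θ (bD 0) < 0 := hB _ (by simp only [BD3, Set.mem_insert_iff]; tauto)
  have h2 : θ (bD 0 + bD 1 + (2 : ℝ) • bD 2) < 0 := hB _ (by
    simp only [BD3, Set.mem_insert_iff, Set.mem_singleton_iff]; tauto)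
  have h3 : 0 < θ ((2 : ℝ) • bD 0 + bD 1 + bD 2) := hC _ (by
    simp only [DD3', Set.mem_insert_iff, Set.mem_singleton_iff]; tauto)
  have h4 : 0 < θ (bD 2) := hC _ (by
    simp only [DD3', Set.mem_insert_iff, Set.mem_singleton_iff]; tauto)
  have key : θ (bD 0) + θ (bD 0 + bD 1 + (2 : ℝ) • bD 2)
      = θ ((2 : ℝ) • bD 0 + bD 1 + bD 2) + θ (bD 2) := by
    rw [← map_add, ← map_add]
    congr 1
    module
  linarith
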